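/- Let G be a ternary semigroup, X a real Banach space, and ε > 0. Suppose f : G → X satisfies ‖f([xyz]) − f(x) − f(y) − f(z)‖ ≤ ε for all x, y, z ∈ G. Then there exists a unique mapping T : G → X such that T(x³) = 3·T(x) and ‖f(x) − T(x)‖ ≤ ε/2 for all x ∈ G. If moreover G is commutative, then T([xyz]) = T(x) + T(y) + T(z) for all x, y, z ∈ G. -/
import Mathlib

section Alg
variable {G : Type*} (op : G → G → G → G)
  (a1 : ∀ x y z u v : G, op (op x y z) u v = op x (op y z u) v)
  (a2 : ∀ x y z u v : G, op x (op y z u) v = op x y (op z u v))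
  (cm1 : ∀ x y z : G, op x y z = op x z y)
  (cm2 : ∀ x y z : G, op x y z = op y x z)

include a1 a2 cm2 in
theorem swapA' (a b c d e : G) : op (op a b c) d e = op (op a b d) c e := by
  rw [(a1 a b c d e).trans (a2 a b c d e), cm2 c d e,
    ← (a1 a b d c e).trans (a2 a b d c e)]

include a1 a2 cm1 cm2 in
theorem keyc' (x y z : G) :
    op (op x y z) (op x y z) (op x y z) = op (op x x x) (op y y y) (op z z z) := by
  have a3 : ∀ x y z u v : G, op (op x y z) u v = op x y (op z u v) :=
    fun x y z u v => (a1 x y z u v).trans (a2 x y z u v)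
  have sA := swapA' op a1 a2 cm2
  have L : op (op x y z) (op x y z) (op x y z)
      = op (op (op (op x y z) x y) z x) y z := by
    rw [← a3 (op x y z) (op x y z) x y z, ← a1 (op x y z) x y z x]
  have R : op (op x x x) (op y y y) (op z z z)
      = op (op (op (op x x x) y y) y z) z z := by
    rw [← a3 (op x x x) (op y y y) z z z, ← a1 (op x x x) y y y z]
  rw [L, R]
  calc op (op (op (op x y z) x y) z x) y z
      = op (op (op (op x y x) z y) z x) y z := by rw [sA x y z x y]
    _ = op (op (op (op x x y) z y) z x) y z := by rw [cm1 x y x]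
    _ = op (op (op (op x x y) z y) x z) y z := by rw [cm1 (op (op x x y) z y) z x]
    _ = op (op (op (op x x y) z x) y z) y z := by rw [sA (op x x y) z y x z]
    _ = op (op (op (op x x y) x z) y z) y z := by rw [cm1 (op x x y) z x]
    _ = op (op (op (op x x x) y z) y z) y z := by rw [sA x x y x z]
    _ = op (op (op (op x x x) y y) z z) y z := by rw [sA (op x x x) y z y z]
    _ = op (op (op (op x x x) y y) z y) z z := by rw [sA (op (op x x x) y y) z z y z]
    _ = op (op (op (op x x x) y y) y z) z z := by rw [cm1 (op (op x x x) y y) z y]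
end Alg

theorem stmt_6 {G : Type*} (op : G → G → G → G)
    (assoc : ∀ x y z u v : G,
      op (op x y z) u v = op x (op y z u) v ∧
      op x (op y z u) v = op x y (op z u v))
    {X : Type*} [NormedAddCommGroup X] [NormedSpace ℝ X] [CompleteSpace X]
    (ε : ℝ) (hε : 0 < ε) (f : G → X)
    (hf : ∀ x y z : G, ‖f (op x y z) - f x - f y - f z‖ ≤ ε) :
    ∃ T : G → X,
      (∀ x : G, T (op x x x) = (3 : ℝ) • T x) ∧
      (∀ x : G, ‖f x - T x‖ ≤ ε / 2) ∧
      (∀ T' : G → X, (∀ x : G, T' (op x x x) = (3 : ℝ) • T' x) →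
        (∀ x : G, ‖f x - T' x‖ ≤ ε / 2) → T' = T) ∧
      ((∀ x y z : G,
          op x y z = op x z y ∧ op x y z = op y x z ∧ op x y z = op y z x ∧
          op x y z = op z x y ∧ op x y z = op z y x) →
        ∀ x y z : G, T (op x y z) = T x + T y + T z) := by
  set c : G → G := fun x => op x x x with hc
  set u : G → ℕ → X := fun x n => ((1:ℝ)/3) ^ n • f (c^[n] x) with hu
  -- step estimate
  have hstep : ∀ (x : G) (n : ℕ),
      dist (u x n) (u x (n + 1)) ≤ (ε / 3) * ((1:ℝ)/3) ^ n := by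
    intro x n
    have h1 : u x n - u x (n + 1)
        = ((1:ℝ)/3) ^ (n+1) • ((3:ℝ) • f (c^[n] x) - f (c^[n+1] x)) := by
      rw [smul_sub, smul_smul]
      simp [hu, pow_succ]
      ring_nf
    have h2 : ‖(3:ℝ) • f (c^[n] x) - f (c^[n+1] x)‖ ≤ ε := by
      have := hf (c^[n] x) (c^[n] x) (c^[n] x)
      have heq : (3:ℝ) • f (c^[n] x) - f (c^[n+1] x)
          = -(f (op (c^[n] x) (c^[n] x) (c^[n] x)) - f (c^[n] x) - f (c^[n] x) - f (c^[n] x)) := by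
        rw [Function.iterate_succ_apply']
        show (3:ℝ) • f (c^[n] x) - f (c (c^[n] x)) = _
        rw [hc]
        module
      rw [heq, norm_neg]
      exact this
    rw [dist_eq_norm, h1, norm_smul]
    have : ‖((1:ℝ)/3) ^ (n+1)‖ = ((1:ℝ)/3)^(n+1) := by
      rw [Real.norm_eq_abs, abs_of_nonneg]; positivity
    rw [this]
    calc ((1:ℝ)/3)^(n+1) * ‖(3:ℝ) • f (c^[n] x) - f (c^[n+1] x)‖
        ≤ ((1:ℝ)/3)^(n+1) * ε := by
          apply mul_le_mul_of_nonneg_left h2; positivity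
      _ = (ε / 3) * ((1:ℝ)/3) ^ n := by ring
  have hr : (1:ℝ)/3 < 1 := by norm_num
  have hcauchy : ∀ x : G, ∃ L : X, Filter.Tendsto (u x) Filter.atTop (nhds L) := by
    intro x
    exact cauchySeq_tendsto_of_complete (cauchySeq_of_le_geometric _ _ hr (hstep x))
  choose T hT using hcauchy
  -- T(x³) = 3 T x
  have hucx : ∀ (x : G) (n : ℕ), u (c x) n = (3:ℝ) • u x (n + 1) := by
    intro x n
    rw [hu]
    show ((1:ℝ)/3) ^ n • f (c^[n] (c x)) = (3:ℝ) • (((1:ℝ)/3) ^ (n+1) • f (c^[n+1] x))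
    rw [← Function.iterate_succ_apply, smul_smul]
    congr 1
    rw [pow_succ]; ring
  have hTc : ∀ x : G, T (c x) = (3:ℝ) • T x := by
    intro x
    have h1 : Filter.Tendsto (fun n => u x (n + 1)) Filter.atTop (nhds (T x)) :=
      (hT x).comp (Filter.tendsto_add_atTop_nat 1)
    have h2 : Filter.Tendsto (u (c x)) Filter.atTop (nhds ((3:ℝ) • T x)) := by
      have he : u (c x) = fun n => (3:ℝ) • u x (n + 1) := funext (hucx x)
      rw [he]
      exact h1.const_smul (3:ℝ)
    exact tendsto_nhds_unique (hT (c x)) h2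
  have hTb : ∀ x : G, ‖f x - T x‖ ≤ ε / 2 := by
    intro x
    have := dist_le_of_le_geometric_of_tendsto₀ ((1:ℝ)/3) (ε/3) hr (hstep x) (hT x)
    have hu0 : u x 0 = f x := by simp [hu]
    rw [hu0, dist_eq_norm] at this
    calc ‖f x - T x‖ ≤ ε / 3 / (1 - 1/3) := this
      _ = ε / 2 := by ring
  refine ⟨T, fun x => hTc x, hTb, ?_, ?_⟩
  · -- uniqueness
    intro T' hT'c hT'b
    funext x
    have hiterT : ∀ (S : G → X), (∀ y, S (c y) = (3:ℝ) • S y) →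
        ∀ n, S (c^[n] x) = (3:ℝ)^n • S x := by
      intro S hS n
      induction n with
      | zero => simp
      | succ n ih =>
        rw [Function.iterate_succ_apply', hS, ih, smul_smul, ← pow_succ']
    have hbound : ∀ n : ℕ, ‖T' x - T x‖ ≤ ε * ((1:ℝ)/3)^n := by
      intro n
      have h1 : ‖T' (c^[n] x) - T (c^[n] x)‖ ≤ ε := by
        calc ‖T' (c^[n] x) - T (c^[n] x)‖
            ≤ ‖f (c^[n] x) - T' (c^[n] x)‖ + ‖f (c^[n] x) - T (c^[n] x)‖ := by
              rw [← norm_neg (f (c^[n] x) - T' (c^[n] x))]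
              calc ‖T' (c^[n] x) - T (c^[n] x)‖
                  = ‖(-(f (c^[n] x) - T' (c^[n] x))) + (f (c^[n] x) - T (c^[n] x))‖ := by abel_nf
                _ ≤ _ := norm_add_le _ _
          _ ≤ ε / 2 + ε / 2 := add_le_add (hT'b _) (hTb _)
          _ = ε := by ring
      rw [hiterT T' hT'c n, hiterT T hTc n, ← smul_sub, norm_smul,
        Real.norm_eq_abs, abs_of_nonneg (by positivity)] at h1
      have h3 : (0:ℝ) < 3^n := by positivity
      rw [show ε * ((1:ℝ)/3)^n = ε / 3^n by rw [div_pow, one_pow]; ring,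
        le_div_iff₀ h3, mul_comm]
      exact h1
    have hlim : Filter.Tendsto (fun n : ℕ => ε * ((1:ℝ)/3)^n) Filter.atTop (nhds 0) := by
      have := tendsto_pow_atTop_nhds_zero_of_lt_one (by norm_num : (0:ℝ) ≤ 1/3) hr
      simpa using this.const_mul ε
    have : ‖T' x - T x‖ ≤ 0 := ge_of_tendsto' hlim hbound
    have := le_antisymm this (norm_nonneg _)
    rwa [norm_eq_zero, sub_eq_zero] at this
  · -- commutative case
    intro hcm x y z
    have cm1 : ∀ x y z : G, op x y z = op x z y := fun a b c => (hcm a b c).1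
    have cm2 : ∀ x y z : G, op x y z = op y x z := fun a b c => (hcm a b c).2.1
    have key : ∀ a b d : G, c (op a b d) = op (c a) (c b) (c d) := by
      intro a b d
      exact keyc' op (fun x y z u v => (assoc x y z u v).1)
        (fun x y z u v => (assoc x y z u v).2) cm1 cm2 a b d
    have hiter : ∀ n : ℕ, c^[n] (op x y z) = op (c^[n] x) (c^[n] y) (c^[n] z) := by
      intro n
      induction n with
      | zero => simp
      | succ n ih =>
        rw [Function.iterate_succ_apply', ih, key, Function.iterate_succ_apply' c n x,
          Function.iterate_succ_apply' c n y, Function.iterate_succ_apply' c n z]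
    have hv : ∀ n : ℕ, ‖u (op x y z) n - u x n - u y n - u z n‖ ≤ ε * ((1:ℝ)/3)^n := by
      intro n
      have heq : u (op x y z) n - u x n - u y n - u z n
          = ((1:ℝ)/3)^n • (f (op (c^[n] x) (c^[n] y) (c^[n] z))
              - f (c^[n] x) - f (c^[n] y) - f (c^[n] z)) := by
        simp only [hu, hiter n, smul_sub]
      rw [heq, norm_smul, Real.norm_eq_abs, abs_of_nonneg (by positivity), mul_comm]
      exact mul_le_mul_of_nonneg_right (hf _ _ _) (by positivity)
    have hlim0 : Filter.Tendsto (fun n => u (op x y z) n - u x n - u y n - u z n)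
        Filter.atTop (nhds 0) := by
      apply squeeze_zero_norm hv
      have := tendsto_pow_atTop_nhds_zero_of_lt_one (by norm_num : (0:ℝ) ≤ 1/3) hr
      simpa using this.const_mul ε
    have hlim1 : Filter.Tendsto (fun n => u (op x y z) n - u x n - u y n - u z n)
        Filter.atTop (nhds (T (op x y z) - T x - T y - T z)) :=
      ((((hT (op x y z)).sub (hT x)).sub (hT y)).sub (hT z))
    have h0 := tendsto_nhds_unique hlim1 hlim0
    have h1 : T (op x y z) - (T x + T y + T z) = 0 := by rw [← h0]; abel
    exact sub_eq_zero.mp h1
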